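/- The D(D₃) R-matrix does not satisfy crossing unitarity: there do not exist an invertible 3×3 complex matrix M, a nonzero λ ∈ ℂ, and a function f with f(z) ≠ 0 for all z, such that R₁₂(λz)^{t₁}·M₁·R₂₁(z⁻¹)^{t₁}·M₁⁻¹ = f(z)·I₉ (where M₁ = M⊗I₃) for all z ∈ ℂˣ with (λz)²−λz+1 ≠ 0 and (z⁻¹)²−z⁻¹+1 ≠ 0. -/

import Mathlib

open Matrix Kronecker

noncomputable section

abbrev Idx9 := Fin 3 × Fin 3

def flipP : Matrix Idx9 Idx9 ℂ := fun p q => if p.1 = q.2 ∧ p.2 = q.1 then 1 else 0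

def RD3 (z : ℂ) : Matrix Idx9 Idx9 ℂ := fun p q =>
  let pf := z * (z - 1) / (z ^ 2 - z + 1)
  let qf := z / (z ^ 2 - z + 1)
  let rf := (1 - z) / (z ^ 2 - z + 1)
  match p, q with
  | (0,0), (0,0) => 1
  | (1,1), (1,1) => 1
  | (2,2), (2,2) => 1
  | (0,1), (0,2) => pf
  | (0,2), (0,1) => pf
  | (1,0), (1,2) => pf
  | (1,2), (1,0) => pf
  | (2,0), (2,1) => pf
  | (2,1), (2,0) => pf
  | (0,1), (1,0) => qf
  | (0,2), (2,0) => qf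
  | (1,0), (0,1) => qf
  | (1,2), (2,1) => qf
  | (2,0), (0,2) => qf
  | (2,1), (1,2) => qf
  | (0,1), (2,1) => rf
  | (0,2), (1,2) => rf
  | (1,0), (2,0) => rf
  | (1,2), (0,2) => rf
  | (2,0), (1,0) => rf
  | (2,1), (0,1) => rf
  | _, _ => 0

def MD3 (z : ℂ) : Matrix Idx9 Idx9 ℂ := fun p q =>
  match p, q with
  | (0,0), (0,0) => z ^ 2 + 1
  | (1,1), (1,1) => z ^ 2 + 1
  | (2,2), (2,2) => z ^ 2 + 1
  | (0,0), (1,1) => z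
  | (0,0), (2,2) => z
  | (1,1), (0,0) => z
  | (1,1), (2,2) => z
  | (2,2), (0,0) => z
  | (2,2), (1,1) => z
  | (0,1), (0,2) => 1
  | (0,2), (0,1) => 1
  | (1,0), (1,2) => 1
  | (1,2), (1,0) => 1
  | (2,0), (2,1) => 1
  | (2,1), (2,0) => 1
  | (0,1), (1,0) => -z
  | (0,2), (2,0) => -z
  | (1,0), (0,1) => -z
  | (1,2), (2,1) => -z
  | (2,0), (0,2) => -z
  | (2,1), (1,2) => -z
  | (0,1), (2,1) => z ^ 2
  | (0,2), (1,2) => z ^ 2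
  | (1,0), (2,0) => z ^ 2
  | (1,2), (0,2) => z ^ 2
  | (2,0), (1,0) => z ^ 2
  | (2,1), (0,1) => z ^ 2
  | _, _ => 0

def curlR (z : ℂ) : Matrix Idx9 Idx9 ℂ :=
  ((z ^ 2 - z + 1) / ((z - 1) * (z ^ 3 - 1))) • MD3 z

def pt1 (A : Matrix Idx9 Idx9 ℂ) : Matrix Idx9 Idx9 ℂ :=
  fun p q => A (q.1, p.2) (p.1, q.2)

/-- The reflection equation (RE−). -/
def REminus (K : ℂ → Matrix (Fin 3) (Fin 3) ℂ) : Prop :=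
  ∀ x y : ℂ, x ≠ 0 → y ≠ 0 →
    (x * y⁻¹) ^ 2 - x * y⁻¹ + 1 ≠ 0 → (x * y) ^ 2 - x * y + 1 ≠ 0 →
    RD3 (x * y⁻¹) * (K x ⊗ₖ (1 : Matrix (Fin 3) (Fin 3) ℂ)) *
        (flipP * RD3 (x * y) * flipP) * ((1 : Matrix (Fin 3) (Fin 3) ℂ) ⊗ₖ K y)
      = ((1 : Matrix (Fin 3) (Fin 3) ℂ) ⊗ₖ K y) * RD3 (x * y) *
          (K x ⊗ₖ (1 : Matrix (Fin 3) (Fin 3) ℂ)) * (flipP * RD3 (x * y⁻¹) * flipP)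

/-- The dual reflection equation (RE+). -/
def REplus (K : ℂ → Matrix (Fin 3) (Fin 3) ℂ) : Prop :=
  ∀ x y : ℂ, x ≠ 0 → y ≠ 0 →
    (y * x⁻¹) ^ 2 - y * x⁻¹ + 1 ≠ 0 → (x * y) ^ 3 ≠ 1 →
    RD3 (y * x⁻¹) * (K x ⊗ₖ (1 : Matrix (Fin 3) (Fin 3) ℂ)) *
        (flipP * curlR (x * y) * flipP) * ((1 : Matrix (Fin 3) (Fin 3) ℂ) ⊗ₖ K y)
      = ((1 : Matrix (Fin 3) (Fin 3) ℂ) ⊗ₖ K y) * curlR (x * y) *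
          (K x ⊗ₖ (1 : Matrix (Fin 3) (Fin 3) ℂ)) * (flipP * RD3 (y * x⁻¹) * flipP)

def StarCond (h : ZMod 3 → ZMod 3 → ℂ → ℂ) (z₀ : ℂ) : Prop :=
  ∀ (i j k l : ZMod 3) (y : ℂ),
    h i j z₀ * h k l y = h i (j + k + 2 * l) z₀ * h (2 * i + 2 * k) (2 * i + 2 * l) y

def NonDiag (h : ZMod 3 → ZMod 3 → ℂ → ℂ) : Prop :=
  ∃ (i j : ZMod 3) (y : ℂ), i ≠ j ∧ h i j y ≠ 0

def Kof (h : ZMod 3 → ZMod 3 → ℂ → ℂ) (z : ℂ) : Matrix (Fin 3) (Fin 3) ℂ :=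
  fun a b => h (((a : ℕ) : ZMod 3) + 1) (((b : ℕ) : ZMod 3) + 1) z

lemma RD3e_0000 (z : ℂ) : RD3 z (0,0) (0,0) = 1 := rfl
lemma RD3e_0001 (z : ℂ) : RD3 z (0,0) (0,1) = 0 := rfl
lemma RD3e_0002 (z : ℂ) : RD3 z (0,0) (0,2) = 0 := rfl
lemma RD3e_0010 (z : ℂ) : RD3 z (0,0) (1,0) = 0 := rfl
lemma RD3e_0011 (z : ℂ) : RD3 z (0,0) (1,1) = 0 := rfl
lemma RD3e_0012 (z : ℂ) : RD3 z (0,0) (1,2) = 0 := rfl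
lemma RD3e_0020 (z : ℂ) : RD3 z (0,0) (2,0) = 0 := rfl
lemma RD3e_0021 (z : ℂ) : RD3 z (0,0) (2,1) = 0 := rfl
lemma RD3e_0022 (z : ℂ) : RD3 z (0,0) (2,2) = 0 := rfl
lemma RD3e_0100 (z : ℂ) : RD3 z (0,1) (0,0) = 0 := rfl
lemma RD3e_0101 (z : ℂ) : RD3 z (0,1) (0,1) = 0 := rfl
lemma RD3e_0102 (z : ℂ) : RD3 z (0,1) (0,2) = z * (z - 1) / (z ^ 2 - z + 1) := rfl
lemma RD3e_0110 (z : ℂ) : RD3 z (0,1) (1,0) = z / (z ^ 2 - z + 1) := rfl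
lemma RD3e_0111 (z : ℂ) : RD3 z (0,1) (1,1) = 0 := rfl
lemma RD3e_0112 (z : ℂ) : RD3 z (0,1) (1,2) = 0 := rfl
lemma RD3e_0120 (z : ℂ) : RD3 z (0,1) (2,0) = 0 := rfl
lemma RD3e_0121 (z : ℂ) : RD3 z (0,1) (2,1) = (1 - z) / (z ^ 2 - z + 1) := rfl
lemma RD3e_0122 (z : ℂ) : RD3 z (0,1) (2,2) = 0 := rfl
lemma RD3e_0200 (z : ℂ) : RD3 z (0,2) (0,0) = 0 := rfl
lemma RD3e_0201 (z : ℂ) : RD3 z (0,2) (0,1) = z * (z - 1) / (z ^ 2 - z + 1) := rfl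
lemma RD3e_0202 (z : ℂ) : RD3 z (0,2) (0,2) = 0 := rfl
lemma RD3e_0210 (z : ℂ) : RD3 z (0,2) (1,0) = 0 := rfl
lemma RD3e_0211 (z : ℂ) : RD3 z (0,2) (1,1) = 0 := rfl
lemma RD3e_0212 (z : ℂ) : RD3 z (0,2) (1,2) = (1 - z) / (z ^ 2 - z + 1) := rfl
lemma RD3e_0220 (z : ℂ) : RD3 z (0,2) (2,0) = z / (z ^ 2 - z + 1) := rfl
lemma RD3e_0221 (z : ℂ) : RD3 z (0,2) (2,1) = 0 := rfl
lemma RD3e_0222 (z : ℂ) : RD3 z (0,2) (2,2) = 0 := rfl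
lemma RD3e_1000 (z : ℂ) : RD3 z (1,0) (0,0) = 0 := rfl
lemma RD3e_1001 (z : ℂ) : RD3 z (1,0) (0,1) = z / (z ^ 2 - z + 1) := rfl
lemma RD3e_1002 (z : ℂ) : RD3 z (1,0) (0,2) = 0 := rfl
lemma RD3e_1010 (z : ℂ) : RD3 z (1,0) (1,0) = 0 := rfl
lemma RD3e_1011 (z : ℂ) : RD3 z (1,0) (1,1) = 0 := rfl
lemma RD3e_1012 (z : ℂ) : RD3 z (1,0) (1,2) = z * (z - 1) / (z ^ 2 - z + 1) := rfl
lemma RD3e_1020 (z : ℂ) : RD3 z (1,0) (2,0) = (1 - z) / (z ^ 2 - z + 1) := rfl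
lemma RD3e_1021 (z : ℂ) : RD3 z (1,0) (2,1) = 0 := rfl
lemma RD3e_1022 (z : ℂ) : RD3 z (1,0) (2,2) = 0 := rfl
lemma RD3e_1100 (z : ℂ) : RD3 z (1,1) (0,0) = 0 := rfl
lemma RD3e_1101 (z : ℂ) : RD3 z (1,1) (0,1) = 0 := rfl
lemma RD3e_1102 (z : ℂ) : RD3 z (1,1) (0,2) = 0 := rfl
lemma RD3e_1110 (z : ℂ) : RD3 z (1,1) (1,0) = 0 := rfl
lemma RD3e_1111 (z : ℂ) : RD3 z (1,1) (1,1) = 1 := rfl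
lemma RD3e_1112 (z : ℂ) : RD3 z (1,1) (1,2) = 0 := rfl
lemma RD3e_1120 (z : ℂ) : RD3 z (1,1) (2,0) = 0 := rfl
lemma RD3e_1121 (z : ℂ) : RD3 z (1,1) (2,1) = 0 := rfl
lemma RD3e_1122 (z : ℂ) : RD3 z (1,1) (2,2) = 0 := rfl
lemma RD3e_1200 (z : ℂ) : RD3 z (1,2) (0,0) = 0 := rfl
lemma RD3e_1201 (z : ℂ) : RD3 z (1,2) (0,1) = 0 := rfl
lemma RD3e_1202 (z : ℂ) : RD3 z (1,2) (0,2) = (1 - z) / (z ^ 2 - z + 1) := rfl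
lemma RD3e_1210 (z : ℂ) : RD3 z (1,2) (1,0) = z * (z - 1) / (z ^ 2 - z + 1) := rfl
lemma RD3e_1211 (z : ℂ) : RD3 z (1,2) (1,1) = 0 := rfl
lemma RD3e_1212 (z : ℂ) : RD3 z (1,2) (1,2) = 0 := rfl
lemma RD3e_1220 (z : ℂ) : RD3 z (1,2) (2,0) = 0 := rfl
lemma RD3e_1221 (z : ℂ) : RD3 z (1,2) (2,1) = z / (z ^ 2 - z + 1) := rfl
lemma RD3e_1222 (z : ℂ) : RD3 z (1,2) (2,2) = 0 := rfl
lemma RD3e_2000 (z : ℂ) : RD3 z (2,0) (0,0) = 0 := rfl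
lemma RD3e_2001 (z : ℂ) : RD3 z (2,0) (0,1) = 0 := rfl
lemma RD3e_2002 (z : ℂ) : RD3 z (2,0) (0,2) = z / (z ^ 2 - z + 1) := rfl
lemma RD3e_2010 (z : ℂ) : RD3 z (2,0) (1,0) = (1 - z) / (z ^ 2 - z + 1) := rfl
lemma RD3e_2011 (z : ℂ) : RD3 z (2,0) (1,1) = 0 := rfl
lemma RD3e_2012 (z : ℂ) : RD3 z (2,0) (1,2) = 0 := rfl
lemma RD3e_2020 (z : ℂ) : RD3 z (2,0) (2,0) = 0 := rfl
lemma RD3e_2021 (z : ℂ) : RD3 z (2,0) (2,1) = z * (z - 1) / (z ^ 2 - z + 1) := rfl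
lemma RD3e_2022 (z : ℂ) : RD3 z (2,0) (2,2) = 0 := rfl
lemma RD3e_2100 (z : ℂ) : RD3 z (2,1) (0,0) = 0 := rfl
lemma RD3e_2101 (z : ℂ) : RD3 z (2,1) (0,1) = (1 - z) / (z ^ 2 - z + 1) := rfl
lemma RD3e_2102 (z : ℂ) : RD3 z (2,1) (0,2) = 0 := rfl
lemma RD3e_2110 (z : ℂ) : RD3 z (2,1) (1,0) = 0 := rfl
lemma RD3e_2111 (z : ℂ) : RD3 z (2,1) (1,1) = 0 := rfl
lemma RD3e_2112 (z : ℂ) : RD3 z (2,1) (1,2) = z / (z ^ 2 - z + 1) := rfl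
lemma RD3e_2120 (z : ℂ) : RD3 z (2,1) (2,0) = z * (z - 1) / (z ^ 2 - z + 1) := rfl
lemma RD3e_2121 (z : ℂ) : RD3 z (2,1) (2,1) = 0 := rfl
lemma RD3e_2122 (z : ℂ) : RD3 z (2,1) (2,2) = 0 := rfl
lemma RD3e_2200 (z : ℂ) : RD3 z (2,2) (0,0) = 0 := rfl
lemma RD3e_2201 (z : ℂ) : RD3 z (2,2) (0,1) = 0 := rfl
lemma RD3e_2202 (z : ℂ) : RD3 z (2,2) (0,2) = 0 := rfl
lemma RD3e_2210 (z : ℂ) : RD3 z (2,2) (1,0) = 0 := rfl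
lemma RD3e_2211 (z : ℂ) : RD3 z (2,2) (1,1) = 0 := rfl
lemma RD3e_2212 (z : ℂ) : RD3 z (2,2) (1,2) = 0 := rfl
lemma RD3e_2220 (z : ℂ) : RD3 z (2,2) (2,0) = 0 := rfl
lemma RD3e_2221 (z : ℂ) : RD3 z (2,2) (2,1) = 0 := rfl
lemma RD3e_2222 (z : ℂ) : RD3 z (2,2) (2,2) = 1 := rfl

lemma pt1_apply (A : Matrix Idx9 Idx9 ℂ) (p q : Idx9) : pt1 A p q = A (q.1, p.2) (p.1, q.2) := rfl

lemma flip_mul (X : Matrix Idx9 Idx9 ℂ) (p q : Idx9) : (flipP * X) p q = X (p.2, p.1) q := by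
  obtain ⟨a,b⟩ := p
  fin_cases a <;> fin_cases b <;>
    simp [Matrix.mul_apply, flipP, Fintype.sum_prod_type, Fin.sum_univ_three]

lemma mul_flip (X : Matrix Idx9 Idx9 ℂ) (p q : Idx9) : (X * flipP) p q = X p (q.2, q.1) := by
  obtain ⟨a,b⟩ := q
  fin_cases a <;> fin_cases b <;>
    simp [Matrix.mul_apply, flipP, Fintype.sum_prod_type, Fin.sum_univ_three]

lemma Bent (y : ℂ) (p q : Idx9) :
    pt1 (flipP * RD3 y * flipP) p q = RD3 y (p.2, q.1) (q.2, p.1) := by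
  rw [pt1_apply, mul_flip, flip_mul]


lemma row0 (M : Matrix (Fin 3) (Fin 3) ℂ) (lam z : ℂ) (f : ℂ → ℂ)
    (hlam : lam ≠ 0) (hz : z ≠ 0) (hz1 : z ≠ 1) (hlz1 : lam * z ≠ 1)
    (hD1 : (lam * z) ^ 2 - lam * z + 1 ≠ 0) (hD2 : (z⁻¹) ^ 2 - z⁻¹ + 1 ≠ 0)
    (E : pt1 (RD3 (lam*z)) * (M ⊗ₖ (1 : Matrix (Fin 3) (Fin 3) ℂ)) * pt1 (flipP * RD3 z⁻¹ * flipP)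
       = f z • (M ⊗ₖ (1 : Matrix (Fin 3) (Fin 3) ℂ))) :
    M 0 0 = 0 ∧ M 0 1 = 0 ∧ M 0 2 = 0 := by
  have hB : pt1 (flipP * RD3 z⁻¹ * flipP) = Matrix.of fun p q : Idx9 => RD3 z⁻¹ (p.2, q.1) (q.2, p.1) := by
    funext p q; exact Bent z⁻¹ p q
  rw [hB] at E
  have hD2' : ((z:ℂ) ^ 2)⁻¹ - z⁻¹ + 1 ≠ 0 := by rw [← inv_pow]; exact hD2
  have hiz : (z:ℂ)⁻¹ ≠ 0 := inv_ne_zero hz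
  have hq : z ^ 2 - z + 1 ≠ 0 := by
    intro h; apply hD2
    have e : (z⁻¹)^2 - z⁻¹ + 1 = (z^2 - z + 1) / z^2 := by field_simp; ring
    rw [e, h, zero_div]
  have hiz1 : (z:ℂ)⁻¹ - 1 ≠ 0 := by
    intro h; apply hz1; field_simp at h; linear_combination -h
  have hlz0 : lam * z ≠ 0 := mul_ne_zero hlam hz
  have hlz1' : lam * z - 1 ≠ 0 := sub_ne_zero.mpr hlz1
  have hz1' : z - 1 ≠ 0 := sub_ne_zero.mpr hz1
  have hizm : (1:ℂ) - z⁻¹ ≠ 0 := fun h => hiz1 (by linear_combination -h)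
  have hzm1 : (1:ℂ) - z ≠ 0 := fun h => hz1' (by linear_combination -h)
  have hzq : z - z ^ 2 + z ^ 2 * z ≠ 0 := by
    intro h; exact (mul_ne_zero hz hq) (by linear_combination h)
  have h1 := congrFun (congrFun E ((0:Fin 3),(1:Fin 3))) ((1:Fin 3),(2:Fin 3))
  have h2 := congrFun (congrFun E ((0:Fin 3),(1:Fin 3))) ((1:Fin 3),(0:Fin 3))
  have h3 := congrFun (congrFun E ((0:Fin 3),(2:Fin 3))) ((2:Fin 3),(0:Fin 3))
  simp only [Matrix.mul_apply, Matrix.of_apply, pt1_apply, Matrix.smul_apply, Matrix.kroneckerMap_apply,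
    Matrix.one_apply, Fintype.sum_prod_type, Fin.sum_univ_three,
    RD3e_0000, RD3e_0001, RD3e_0002, RD3e_0010, RD3e_0011, RD3e_0012, RD3e_0020, RD3e_0021, RD3e_0022, RD3e_0100, RD3e_0101, RD3e_0102, RD3e_0110, RD3e_0111, RD3e_0112, RD3e_0120, RD3e_0121, RD3e_0122, RD3e_0200, RD3e_0201, RD3e_0202, RD3e_0210, RD3e_0211, RD3e_0212, RD3e_0220, RD3e_0221, RD3e_0222, RD3e_1000, RD3e_1001, RD3e_1002, RD3e_1010, RD3e_1011, RD3e_1012, RD3e_1020, RD3e_1021, RD3e_1022, RD3e_1100, RD3e_1101, RD3e_1102, RD3e_1110, RD3e_1111, RD3e_1112, RD3e_1120, RD3e_1121, RD3e_1122, RD3e_1200, RD3e_1201, RD3e_1202, RD3e_1210, RD3e_1211, RD3e_1212, RD3e_1220, RD3e_1221, RD3e_1222, RD3e_2000, RD3e_2001, RD3e_2002, RD3e_2010, RD3e_2011, RD3e_2012, RD3e_2020, RD3e_2021, RD3e_2022, RD3e_2100, RD3e_2101, RD3e_2102, RD3e_2110, RD3e_2111, RD3e_2112, RD3e_2120, RD3e_2121,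 RD3e_2122, RD3e_2200, RD3e_2201, RD3e_2202, RD3e_2210, RD3e_2211, RD3e_2212, RD3e_2220, RD3e_2221, RD3e_2222] at h1 h2 h3
  norm_num [Fin.ext_iff] at h1 h2 h3
  field_simp [hD1, hD2'] at h1 h2 h3
  have hA : lam * z * (lam * z - 1) + 1 ≠ 0 := fun h => hD1 (by linear_combination h)
  have hB' : 1 - z + z ^ 2 ≠ 0 := fun h => hq (by linear_combination h)
  simp only [hlam, hz, hlz1', hD1, hD2', hiz1, hizm, hz1', hzm1, hzq, hA, hB', zero_mul, mul_zero, or_false, false_or] at h1 h2 h3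
  exact ⟨h1, h2, h3⟩


/-- the `D(D₃)` R-matrix does not satisfy crossing unitarity. -/
theorem statement_17 :
    ¬ ∃ (M : Matrix (Fin 3) (Fin 3) ℂ) (lam : ℂ) (f : ℂ → ℂ),
        IsUnit M ∧ lam ≠ 0 ∧ (∀ z : ℂ, f z ≠ 0) ∧
        ∀ z : ℂ, z ≠ 0 → (lam * z) ^ 2 - lam * z + 1 ≠ 0 →
          (z⁻¹) ^ 2 - z⁻¹ + 1 ≠ 0 →
          pt1 (RD3 (lam * z)) * (M ⊗ₖ (1 : Matrix (Fin 3) (Fin 3) ℂ)) *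
              pt1 (flipP * RD3 z⁻¹ * flipP) * (M⁻¹ ⊗ₖ (1 : Matrix (Fin 3) (Fin 3) ℂ))
            = f z • (1 : Matrix Idx9 Idx9 ℂ) := by
  rintro ⟨M, lam, f, hM, hlam, hf, h⟩
  have hdet : IsUnit M.det := (Matrix.isUnit_iff_isUnit_det M).mp hM
  have key : ∀ z : ℂ, z ≠ 0 → z ≠ 1 → lam * z ≠ 1 →
      (lam * z) ^ 2 - lam * z + 1 ≠ 0 → (z⁻¹) ^ 2 - z⁻¹ + 1 ≠ 0 →
      M 0 0 = 0 ∧ M 0 1 = 0 ∧ M 0 2 = 0 := by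
    intro z hz hz1 hlz1 hD1 hD2
    have h0 := h z hz hD1 hD2
    have E : pt1 (RD3 (lam*z)) * (M ⊗ₖ (1 : Matrix (Fin 3) (Fin 3) ℂ)) *
        pt1 (flipP * RD3 z⁻¹ * flipP) = f z • (M ⊗ₖ (1 : Matrix (Fin 3) (Fin 3) ℂ)) := by
      calc pt1 (RD3 (lam*z)) * (M ⊗ₖ (1 : Matrix (Fin 3) (Fin 3) ℂ)) *
              pt1 (flipP * RD3 z⁻¹ * flipP)
          = pt1 (RD3 (lam*z)) * (M ⊗ₖ (1 : Matrix (Fin 3) (Fin 3) ℂ)) *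
              pt1 (flipP * RD3 z⁻¹ * flipP) *
              ((M⁻¹ ⊗ₖ (1 : Matrix (Fin 3) (Fin 3) ℂ)) * (M ⊗ₖ (1 : Matrix (Fin 3) (Fin 3) ℂ))) := by
            rw [← Matrix.mul_kronecker_mul, Matrix.nonsing_inv_mul M hdet, Matrix.one_mul,
              Matrix.one_kronecker_one, Matrix.mul_one]
        _ = pt1 (RD3 (lam*z)) * (M ⊗ₖ (1 : Matrix (Fin 3) (Fin 3) ℂ)) *
              pt1 (flipP * RD3 z⁻¹ * flipP) * (M⁻¹ ⊗ₖ (1 : Matrix (Fin 3) (Fin 3) ℂ)) *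
              (M ⊗ₖ (1 : Matrix (Fin 3) (Fin 3) ℂ)) := by
            simp only [Matrix.mul_assoc]
        _ = (f z • (1 : Matrix Idx9 Idx9 ℂ)) * (M ⊗ₖ (1 : Matrix (Fin 3) (Fin 3) ℂ)) := by
            rw [h0]
        _ = f z • (M ⊗ₖ (1 : Matrix (Fin 3) (Fin 3) ℂ)) := by
            rw [Matrix.smul_mul, Matrix.one_mul]
    exact row0 M lam z f hlam hz hz1 hlz1 hD1 hD2 E
  have hgood : ∃ z : ℂ, z ≠ 0 ∧ z ≠ 1 ∧ lam * z ≠ 1 ∧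
      (lam * z) ^ 2 - lam * z + 1 ≠ 0 ∧ (z⁻¹) ^ 2 - z⁻¹ + 1 ≠ 0 := by
    by_cases ha : lam * 2 = 1
    · refine ⟨3, by norm_num, by norm_num, ?_, ?_, by norm_num⟩
      · intro hcon
        have h1 : (1 : ℂ) = 0 := by linear_combination 2 * hcon - 3 * ha
        exact one_ne_zero h1
      · intro hcon
        have h7 : (7 : ℂ) = 0 := by linear_combination 4 * hcon - (18 * lam + 3) * ha
        norm_num at h7
    · by_cases hb : (lam * 2) ^ 2 - lam * 2 + 1 = 0
      · refine ⟨3, by norm_num, by norm_num, ?_, ?_, by norm_num⟩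
        · intro hcon
          have h7 : (7 : ℂ) = 0 := by linear_combination 9 * hb - (12 * lam - 2) * hcon
          norm_num at h7
        · intro hcon
          have h5 : (6 : ℂ) * lam - 5 = 0 := by linear_combination -9 * hb + 4 * hcon
          have h19 : (19 : ℂ) = 0 := by linear_combination 9 * hb - (6 * lam + 2) * h5
          norm_num at h19
      · exact ⟨2, by norm_num, by norm_num, ha, hb, by norm_num⟩
  obtain ⟨z, hz, hz1, hlz1, hD1, hD2⟩ := hgood
  obtain ⟨e0, e1, e2⟩ := key z hz hz1 hlz1 hD1 hD2
  have hdet0 : M.det = 0 := by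
    apply Matrix.det_eq_zero_of_row_eq_zero 0
    intro j; fin_cases j <;> assumption
  rw [hdet0] at hdet
  exact one_ne_zero (isUnit_zero_iff.mp hdet).symm
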